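/- arXiv:2002.08305 — 2 statements merged into one kernel-verified Lean document; each statement's English description precedes it below -/
import Mathlib

section
/- Let G be the abelian group with presentation ⟨A, B, C, D | D = A·B·C⁻¹, C² = B²⟩. Then G is isomorphic to ℤ ⊕ ℤ ⊕ ℤ/2ℤ. -/
/-- The subgroup of relations: D = A + B - C (i.e. A + B - C - D = 0) and 2C = 2B. -/
def relSubgroup : AddSubgroup (ℤ × ℤ × ℤ × ℤ) :=
  AddSubgroup.closure {(1, 1, -1, -1), (0, -2, 2, 0)}

/-- The abelian group ⟨A, B, C, D | D = A·B·C⁻¹, C² = B²⟩, written additively. -/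
abbrev PresGroup := (ℤ × ℤ × ℤ × ℤ) ⧸ relSubgroup

def projHom : (ℤ × ℤ × ℤ × ℤ) →+ (ℤ × ℤ × ZMod 2) where
  toFun p := (p.1 + p.2.2.2, p.2.1 + p.2.2.1, (p.2.2.1 + p.2.2.2 : ℤ))
  map_zero' := by simp
  map_add' := by
    rintro ⟨a,b,c,d⟩ ⟨a',b',c',d'⟩
    simp only [Prod.mk_add_mk, Prod.ext_iff]
    push_cast
    refine ⟨by ring, by ring, by ring⟩

lemma ker_eq : projHom.ker = relSubgroup := by
  apply le_antisymm
  · intro p hp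
    obtain ⟨a, b, c, d⟩ := p
    simp only [AddMonoidHom.mem_ker, projHom, AddMonoidHom.coe_mk, ZeroHom.coe_mk,
      Prod.mk.injEq, Prod.mk_eq_zero] at hp
    obtain ⟨h1, h2, h3⟩ := hp
    have h3' : (2 : ℤ) ∣ (c + d) := by
      have := (ZMod.intCast_zmod_eq_zero_iff_dvd (c + d) 2).mp h3
      exact_mod_cast this
    obtain ⟨k, hk⟩ := h3'
    -- element = a • (1,1,-1,-1) + y • (0,-2,2,0), with y = (a-b)/2
    have hy : (a, b, c, d) = a • ((1 : ℤ), (1 : ℤ), (-1 : ℤ), (-1 : ℤ))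
        + ((a - b) / 2) • ((0 : ℤ), (-2 : ℤ), (2 : ℤ), (0 : ℤ)) := by
      have hd : d = -a := by linarith
      have hc : c = -b := by linarith
      have hdiv : (2 : ℤ) ∣ (a - b) := by
        refine ⟨c - k, ?_⟩; omega
      obtain ⟨m, hm⟩ := hdiv
      have hm' : (a - b) / 2 = m := by omega
      simp only [Prod.smul_mk, smul_eq_mul, Prod.mk_add_mk, Prod.mk.injEq, hm']
      refine ⟨by ring, by omega, by omega, by omega⟩
    rw [hy]
    exact add_mem (AddSubgroup.zsmul_mem _ (AddSubgroup.subset_closure (by simp)) _)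
      (AddSubgroup.zsmul_mem _ (AddSubgroup.subset_closure (by simp)) _)
  · rw [relSubgroup, AddSubgroup.closure_le]
    rintro p (rfl | rfl) <;>
      simp [projHom, AddMonoidHom.mem_ker] <;> decide

lemma proj_surj : Function.Surjective projHom := by
  rintro ⟨x, y, z⟩
  obtain ⟨z', rfl⟩ := ZMod.intCast_surjective z
  exact ⟨(x, y - z', z', 0), by simp [projHom]⟩

theorem pres_group_iso : Nonempty (PresGroup ≃+ (ℤ × ℤ × ZMod 2)) := by
  exact ⟨(QuotientAddGroup.quotientAddEquivOfEq ker_eq.symm).trans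
    (QuotientAddGroup.quotientKerEquivOfSurjective projHom proj_surj)⟩
end

section
/- Let m, l, p, q, r, s and m', l', p', q', r', s' be integers with p + q + r + s ≡ m (mod 2) and p' + q' + r' + s' ≡ m' (mod 2). Let ε = m mod 2 ∈ {0,1}. Suppose m = m', 2l + q + s = 2l' + q' + s', and ((p,q),(r,s+ε)) ≐ ((p',q'),(r',s'+ε)), where ≐ identifies a pair of pairs with its simultaneous swap. Then either (l, p, q, r, s) = (l', p', q', r', s'), or (p = q', q = p', r = s' + ε, s = r' − ε, and 2l = 2l' − p' + q' − r' + s' + ε). -/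
/-- The relation ≐ : simultaneous swap within both pairs. -/
def doteq : (ℤ × ℤ) × (ℤ × ℤ) → (ℤ × ℤ) × (ℤ × ℤ) → Prop :=
  fun x y =>
    (x.1.1 = y.1.1 ∧ x.1.2 = y.1.2 ∧ x.2.1 = y.2.1 ∧ x.2.2 = y.2.2) ∨
    (x.1.1 = y.1.2 ∧ x.1.2 = y.1.1 ∧ x.2.1 = y.2.2 ∧ x.2.2 = y.2.1)

theorem classification_core (m l p q r s m' l' p' q' r' s' : ℤ)
    (hpar : p + q + r + s ≡ m [ZMOD 2]) (hpar' : p' + q' + r' + s' ≡ m' [ZMOD 2])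
    (hm : m = m') (hJ : 2 * l + q + s = 2 * l' + q' + s')
    (hF : doteq ((p, q), (r, s + m % 2)) ((p', q'), (r', s' + m % 2))) :
    (l = l' ∧ p = p' ∧ q = q' ∧ r = r' ∧ s = s') ∨
    (p = q' ∧ q = p' ∧ r = s' + m % 2 ∧ s = r' - m % 2 ∧
      2 * l = 2 * l' - p' + q' - r' + s' + m % 2) := by
  rcases hF with ⟨h1, h2, h3, h4⟩ | ⟨h1, h2, h3, h4⟩
  · simp only at h1 h2 h3 h4
    left; omega
  · simp only at h1 h2 h3 h4
    right; omega
end
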